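/- Let q > 2 and let C' ⊆ ℤ_q^m be single-error-correcting for the channel ℛ_q. Then the concatenated code C = {z ∈ ℤ_q^{2m} : (z_{2j} − z_{2j−1})_{j=1,…,m} ∈ C'} corrects a single asymmetric 1-limited-magnitude error with wrap-around: for all distinct x, x̂ ∈ C and all e, ê ∈ {0,1}^{2m} each having at most one nonzero coordinate, one has x − e ≢ x̂ − ê coordinatewise mod q. -/
import Mathlib

/-- The `ℛ_q`-ball of `c ∈ ℤ_qᵐ`: words obtained from `c` by changing at most one
coordinate by `±1 (mod q)`. -/
def RBall {q m : ℕ} (c : Fin m → ZMod q) : Set (Fin m → ZMod q) :=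
  {d | d = c ∨ ∃ i, (d i = c i + 1 ∨ d i = c i - 1) ∧ ∀ j, j ≠ i → d j = c j}

/-- The word of pairwise differences `(z_{2j} - z_{2j-1})_{j=1,…,m}` of `z ∈ ℤ_q^{2m}`
(0-based: `z_{2j+1} - z_{2j}`). -/
def pairDiffZ (q m : ℕ) (z : Fin (2 * m) → ZMod q) : Fin m → ZMod q :=
  fun j => z ⟨2 * (j : ℕ) + 1, by have := j.isLt; omega⟩ -
           z ⟨2 * (j : ℕ), by have := j.isLt; omega⟩

lemma one_ne_zero_zmod {q : ℕ} (hq : 2 < q) : (1 : ZMod q) ≠ 0 := by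
  haveI : NeZero q := ⟨by omega⟩
  intro hh
  have : (q : ℕ) ∣ 1 := by
    have := (ZMod.natCast_eq_zero_iff 1 q).mp (by exact_mod_cast hh)
    exact this
  have := Nat.le_of_dvd one_pos this
  omega

lemma one_ne_negone_zmod {q : ℕ} (hq : 2 < q) : (1 : ZMod q) ≠ -1 := by
  haveI : NeZero q := ⟨by omega⟩
  intro hh
  have h2' : ((2 : ℕ) : ZMod q) = 0 := by push_cast; linear_combination hh
  have := Nat.le_of_dvd two_pos ((ZMod.natCast_eq_zero_iff 2 q).mp h2')
  omega

lemma pair_eq {q : ℕ} (hq : 2 < q) (a1 a0 b1 b0 : ℕ)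
    (ha1 : a1 ≤ 1) (ha0 : a0 ≤ 1) (hb1 : b1 ≤ 1) (hb0 : b0 ≤ 1)
    (ha : a1 = 0 ∨ a0 = 0) (hb : b1 = 0 ∨ b0 = 0)
    (h : (a1 : ZMod q) - a0 = (b1 : ZMod q) - b0) : a1 = b1 ∧ a0 = b0 := by
  have h1 : (1 : ZMod q) ≠ 0 := one_ne_zero_zmod hq
  have h2 : (1 : ZMod q) ≠ -1 := one_ne_negone_zmod hq
  have hm : (-1 : ZMod q) ≠ 0 := by
    intro hh; exact h1 (by rw [← neg_neg (1 : ZMod q), hh, neg_zero])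
  interval_cases a1 <;> interval_cases a0 <;> interval_cases b1 <;> interval_cases b0 <;>
    simp_all

lemma mem_rball_sub {q m : ℕ} (c u : Fin m → ZMod q)
    (hv : ∀ j, u j = 0 ∨ u j = 1 ∨ u j = -1)
    (hs : ∀ j j', u j ≠ 0 → u j' ≠ 0 → j = j') :
    (fun j => c j - u j) ∈ RBall c := by
  simp only [RBall, Set.mem_setOf_eq]
  by_cases hz : ∀ j, u j = 0
  · left; funext j; simp [hz j]
  · push_neg at hz
    obtain ⟨j0, hj0⟩ := hz
    right
    refine ⟨j0, ?_, ?_⟩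
    · rcases hv j0 with h0 | h0 | h0
      · exact absurd h0 hj0
      · right; show c j0 - u j0 = c j0 - 1; rw [h0]
      · left; show c j0 - u j0 = c j0 + 1; rw [h0]; ring
    · intro j hjne
      have hj : u j = 0 := by
        by_contra hh
        exact hjne (hs j j0 hh hj0)
      show c j - u j = c j
      rw [hj, sub_zero]

/-- If `C' ⊆ ℤ_qᵐ` (with `q > 2`) is single-error-correcting for `ℛ_q`, then the
concatenated code `C = {z ∈ ℤ_q^{2m} : pairDiffZ z ∈ C'}` corrects a single asymmetric
`1`-limited-magnitude error with wrap-around: for distinct `x, x' ∈ C` and error words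
`e, e' ∈ {0,1}^{2m}`, each with at most one nonzero coordinate,
`x - e ≢ x' - e' (mod q)`. -/
theorem concat_corrects_limited_magnitude_wrap (q m : ℕ) (hq : 2 < q)
    (C' : Set (Fin m → ZMod q))
    (hsec : ∀ c ∈ C', ∀ c' ∈ C', c ≠ c' → Disjoint (RBall c) (RBall c')) :
    ∀ x x' : Fin (2 * m) → ZMod q,
      pairDiffZ q m x ∈ C' → pairDiffZ q m x' ∈ C' → x ≠ x' →
      ∀ e e' : Fin (2 * m) → ℕ,
        (Finset.univ.filter fun i => e i ≠ 0).card ≤ 1 → (∀ i, e i ≤ 1) →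
        (Finset.univ.filter fun i => e' i ≠ 0).card ≤ 1 → (∀ i, e' i ≤ 1) →
        ¬(∀ i, x i - (e i : ZMod q) = x' i - (e' i : ZMod q)) := by
  intro x x' hx hx' hne e e' hce he hce' he' h
  have hE : ∀ i j, e i ≠ 0 → e j ≠ 0 → i = j := by
    intro i j hi hj
    exact Finset.card_le_one.mp hce i (by simp [hi]) j (by simp [hj])
  have hE' : ∀ i j, e' i ≠ 0 → e' j ≠ 0 → i = j := by
    intro i j hi hj
    exact Finset.card_le_one.mp hce' i (by simp [hi]) j (by simp [hj])
  let I0 : Fin m → Fin (2 * m) := fun j => ⟨2 * (j : ℕ), by have := j.isLt; omega⟩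
  let I1 : Fin m → Fin (2 * m) := fun j => ⟨2 * (j : ℕ) + 1, by have := j.isLt; omega⟩
  let u : Fin m → ZMod q := fun j => (e (I1 j) : ZMod q) - (e (I0 j) : ZMod q)
  let u' : Fin m → ZMod q := fun j => (e' (I1 j) : ZMod q) - (e' (I0 j) : ZMod q)
  set c := pairDiffZ q m x with hcdef
  set c' := pairDiffZ q m x' with hcdef'
  have hcI : ∀ j, c j = x (I1 j) - x (I0 j) := fun j => rfl
  have hcI' : ∀ j, c' j = x' (I1 j) - x' (I0 j) := fun j => rfl
  have key : ∀ j, c j - u j = c' j - u' j := by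
    intro j
    have h1' := h (I1 j)
    have h0' := h (I0 j)
    rw [hcI, hcI']
    show x (I1 j) - x (I0 j) - ((e (I1 j) : ZMod q) - e (I0 j)) =
      x' (I1 j) - x' (I0 j) - ((e' (I1 j) : ZMod q) - e' (I0 j))
    linear_combination h1' - h0'
  -- values of u
  have hval : ∀ (f : Fin (2 * m) → ℕ), (∀ i, f i ≤ 1) → ∀ j,
      ((f (I1 j) : ZMod q) - f (I0 j) = 0 ∨ (f (I1 j) : ZMod q) - f (I0 j) = 1 ∨
        (f (I1 j) : ZMod q) - f (I0 j) = -1) := by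
    intro f hf j
    have h1 : f (I1 j) = 0 ∨ f (I1 j) = 1 := by have := hf (I1 j); omega
    have h0 : f (I0 j) = 0 ∨ f (I0 j) = 1 := by have := hf (I0 j); omega
    rcases h1 with h1 | h1 <;> rcases h0 with h0 | h0 <;> simp [h1, h0]
  have hsupp : ∀ (f : Fin (2 * m) → ℕ), (∀ i j, f i ≠ 0 → f j ≠ 0 → i = j) →
      ∀ j j', ((f (I1 j) : ZMod q) - f (I0 j)) ≠ 0 →
        ((f (I1 j') : ZMod q) - f (I0 j')) ≠ 0 → j = j' := by
    intro f hf j j' hj hj'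
    have hi : f (I1 j) ≠ 0 ∨ f (I0 j) ≠ 0 := by
      by_contra hh
      push_neg at hh
      exact hj (by simp [hh.1, hh.2])
    have hi' : f (I1 j') ≠ 0 ∨ f (I0 j') ≠ 0 := by
      by_contra hh
      push_neg at hh
      exact hj' (by simp [hh.1, hh.2])
    rcases hi with hi | hi <;> rcases hi' with hi' | hi' <;>
      · have hv := congrArg Fin.val (hf _ _ hi hi')
        simp only [I0, I1] at hv
        exact Fin.ext (by omega)
  have hw : (fun j => c j - u j) ∈ RBall c := mem_rball_sub c u (hval e he) (hsupp e hE)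
  have hw' : (fun j => c' j - u' j) ∈ RBall c' :=
    mem_rball_sub c' u' (hval e' he') (hsupp e' hE')
  have hfeq : (fun j => c j - u j) = (fun j => c' j - u' j) := funext key
  have hcc : c = c' := by
    by_contra hcc
    exact Set.disjoint_left.mp (hsec c hx c' hx' hcc) hw (hfeq ▸ hw')
  have huu : ∀ j, u j = u' j := by
    intro j
    have k := key j
    rw [hcc] at k
    exact sub_right_inj.mp k
  have hpairE : ∀ (f : Fin (2 * m) → ℕ), (∀ i j, f i ≠ 0 → f j ≠ 0 → i = j) →
      ∀ j, f (I1 j) = 0 ∨ f (I0 j) = 0 := by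
    intro f hf j
    by_contra hh
    push_neg at hh
    have hv := congrArg Fin.val (hf _ _ hh.1 hh.2)
    simp only [I0, I1] at hv
    omega
  have hee : ∀ i, e i = e' i := by
    intro i
    have hi2 : (i : ℕ) / 2 < m := by have := i.isLt; omega
    set j : Fin m := ⟨(i : ℕ) / 2, hi2⟩ with hjdef
    have hu := huu j
    have hp := pair_eq hq _ _ _ _ (he (I1 j)) (he (I0 j)) (he' (I1 j)) (he' (I0 j))
      (hpairE e hE j) (hpairE e' hE' j) hu
    have hcase : i = I0 j ∨ i = I1 j := by
      rcases Nat.even_or_odd (i : ℕ) with ⟨k, hk⟩ | ⟨k, hk⟩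
      · left; apply Fin.ext; show (i : ℕ) = 2 * ((i : ℕ) / 2); omega
      · right; apply Fin.ext; show (i : ℕ) = 2 * ((i : ℕ) / 2) + 1; omega
    rcases hcase with hcase | hcase
    · rw [hcase]; exact hp.2
    · rw [hcase]; exact hp.1
  apply hne
  funext i
  have hi := h i
  rw [hee i] at hi
  linear_combination hi
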